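/- Let K_m be the complete graph on m ≥ 2 vertices with m odd. Then ⊗^2 K_m does not admit perfect state transfer between (0,u) and (1,u) for any vertex u and any time τ. -/

import Mathlib

/-- The blow-up of `n` copies of `G`. -/
def SimpleGraph.blowup {V : Type*} (n : ℕ) (G : SimpleGraph V) : SimpleGraph (ZMod n × V) :=
  G.comap Prod.snd

instance {V : Type*} {n : ℕ} (G : SimpleGraph V) [h : DecidableRel G.Adj] :
    DecidableRel (G.blowup n).Adj := fun x y => h x.2 y.2

open NormedSpace Nat Matrix

set_option maxHeartbeats 1000000

theorem exp_smul_idem_banach {𝔸 : Type*} [NormedRing 𝔸] [NormedAlgebra ℂ 𝔸] [CompleteSpace 𝔸]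
    (c : ℂ) (p : 𝔸) (hp : p * p = p) :
    NormedSpace.exp (c • p) = 1 + (Complex.exp c - 1) • p := by
  have hsum : Summable fun n : ℕ => ((n ! : ℂ))⁻¹ • (c • p) ^ n :=
    expSeries_summable' (𝕂 := ℂ) (c • p)
  have hcsum : Summable fun n : ℕ => ((n ! : ℂ))⁻¹ * c ^ n := by
    simpa [smul_eq_mul] using expSeries_summable' (𝕂 := ℂ) (𝔸 := ℂ) c
  have hcsum' : Summable fun n : ℕ => (((n + 1)! : ℂ))⁻¹ * c ^ (n + 1) :=
    (summable_nat_add_iff 1).2 hcsum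
  have hscalar : (∑' n : ℕ, (((n + 1)! : ℂ))⁻¹ * c ^ (n + 1)) = Complex.exp c - 1 := by
    have h := congrFun (exp_eq_tsum (𝕂 := ℂ) (𝔸 := ℂ)) c
    simp only [smul_eq_mul] at h
    rw [Summable.tsum_eq_zero_add hcsum] at h
    rw [Complex.exp_eq_exp_ℂ, h]
    simp
  have hterm : ∀ n : ℕ, (((n + 1)! : ℂ))⁻¹ • (c • p) ^ (n + 1)
      = ((((n + 1)! : ℂ))⁻¹ * c ^ (n + 1)) • p := by
    intro n
    rw [smul_pow, IsIdempotentElem.pow_succ_eq n hp, smul_smul]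
  calc NormedSpace.exp (c • p) = ∑' n : ℕ, ((n ! : ℂ))⁻¹ • (c • p) ^ n :=
        congrFun (exp_eq_tsum (𝕂 := ℂ)) _
    _ = ((0! : ℂ))⁻¹ • (c • p) ^ 0 + ∑' n : ℕ, (((n + 1)! : ℂ))⁻¹ • (c • p) ^ (n + 1) :=
        Summable.tsum_eq_zero_add hsum
    _ = 1 + (Complex.exp c - 1) • p := by
        rw [tsum_congr hterm, Summable.tsum_smul_const hcsum', hscalar]
        simp

theorem matrix_exp_smul_idem {n : Type*} [Fintype n] [DecidableEq n]
    (c : ℂ) (p : Matrix n n ℂ) (hp : p * p = p) :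
    NormedSpace.exp (c • p) = 1 + (Complex.exp c - 1) • p := by
  letI : SeminormedRing (Matrix n n ℂ) := Matrix.linftyOpSemiNormedRing
  letI : NormedRing (Matrix n n ℂ) := Matrix.linftyOpNormedRing
  letI : NormedAlgebra ℂ (Matrix n n ℂ) := Matrix.linftyOpNormedAlgebra
  exact exp_smul_idem_banach c p hp

namespace BlowupPST

variable (m : ℕ)

noncomputable def J : Matrix (ZMod 2 × Fin m) (ZMod 2 × Fin m) ℂ :=
  Matrix.of fun _ _ => 1

noncomputable def B : Matrix (ZMod 2 × Fin m) (ZMod 2 × Fin m) ℂ :=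
  Matrix.of fun x y => if x.2 = y.2 then 1 else 0

lemma card2 (v : Fin m) :
    (Finset.univ.filter fun x : ZMod 2 × Fin m => x.2 = v).card = 2 := by
  have h : (Finset.univ.filter fun x : ZMod 2 × Fin m => x.2 = v)
      = Finset.univ ×ˢ {v} := by
    ext x
    simp only [Finset.mem_filter, Finset.mem_univ, true_and, Finset.mem_product,
      Finset.mem_singleton]
  rw [h, Finset.card_product]
  simp

lemma JJ : J m * J m = (2 * m : ℂ) • J m := by
  ext x y
  simp [J, Matrix.mul_apply, Finset.card_univ, mul_comm]

lemma BB : B m * B m = (2 : ℂ) • B m := by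
  ext x y
  simp [B, Matrix.mul_apply, Fintype.sum_prod_type, ite_and, Finset.sum_ite_eq,
    Finset.sum_ite_eq']
  split_ifs <;> simp

lemma JB : J m * B m = (2 : ℂ) • J m := by
  ext x y
  simp [J, B, Matrix.mul_apply, Fintype.sum_prod_type, Finset.sum_ite_eq, Finset.sum_ite_eq']
  have := card2 m y.2
  simp only [this]
  norm_num

lemma Bsymm : (B m)ᵀ = B m := by
  ext x y
  simp [B, Matrix.transpose_apply, eq_comm]

lemma BJ : B m * J m = (2 : ℂ) • J m := by
  have h : B m * J m = ((J m)ᵀ * (B m)ᵀ)ᵀ := by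
    rw [← Matrix.transpose_mul, Matrix.transpose_transpose]
  rw [h, Bsymm, show (J m)ᵀ = J m from rfl, JB, Matrix.transpose_smul,
    show (J m)ᵀ = J m from rfl]

/-- The scaled projection onto the second nontrivial eigenspace. -/
noncomputable def P2 : Matrix (ZMod 2 × Fin m) (ZMod 2 × Fin m) ℂ :=
  (m : ℂ) • B m - J m

lemma P2P2 : P2 m * P2 m = (2 * m : ℂ) • P2 m := by
  rw [P2]
  simp only [Matrix.sub_mul, Matrix.mul_sub, Matrix.smul_mul, Matrix.mul_smul, BB, BJ, JB, JJ]
  match_scalars <;> ring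

lemma JP2 : J m * P2 m = 0 := by
  rw [P2, Matrix.mul_sub, Matrix.mul_smul, JB, JJ]
  match_scalars <;> ring

lemma P2J : P2 m * J m = 0 := by
  rw [P2, Matrix.sub_mul, Matrix.smul_mul, BJ, JJ]
  match_scalars <;> ring

noncomputable def E1 : Matrix (ZMod 2 × Fin m) (ZMod 2 × Fin m) ℂ :=
  ((2 * m : ℂ))⁻¹ • J m

noncomputable def E2 : Matrix (ZMod 2 × Fin m) (ZMod 2 × Fin m) ℂ :=
  ((2 * m : ℂ))⁻¹ • P2 m

variable {m}

lemma scaled_idem {c : ℂ} (hc : c ≠ 0) {P : Matrix (ZMod 2 × Fin m) (ZMod 2 × Fin m) ℂ}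
    (h : P * P = c • P) : (c⁻¹ • P) * (c⁻¹ • P) = c⁻¹ • P := by
  rw [Matrix.smul_mul, Matrix.mul_smul, h, smul_smul, smul_smul]
  congr 1
  field_simp

lemma hE1 (hc : (2 * m : ℂ) ≠ 0) : E1 m * E1 m = E1 m :=
  scaled_idem hc (JJ m)

lemma hE2 (hc : (2 * m : ℂ) ≠ 0) : E2 m * E2 m = E2 m :=
  scaled_idem hc (P2P2 m)

lemma hE12 : E1 m * E2 m = 0 := by
  rw [E1, E2, Matrix.smul_mul, Matrix.mul_smul, JP2, smul_zero, smul_zero]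

lemma hE21 : E2 m * E1 m = 0 := by
  rw [E1, E2, Matrix.smul_mul, Matrix.mul_smul, P2J, smul_zero, smul_zero]

lemma adj_eq :
    ((⊤ : SimpleGraph (Fin m)).blowup 2).adjMatrix ℂ = J m - B m := by
  ext x y
  rw [SimpleGraph.adjMatrix_apply]
  simp only [SimpleGraph.blowup, SimpleGraph.comap_adj, SimpleGraph.top_adj,
    Matrix.sub_apply, J, B, Matrix.of_apply]
  by_cases h : x.2 = y.2 <;> simp [h]

lemma decomp (hm : (m : ℂ) ≠ 0) :
    J m - B m = (2 * m - 2 : ℂ) • E1 m + (-2 : ℂ) • E2 m := by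
  rw [E1, E2, P2]
  match_scalars <;> field_simp <;> ring

end BlowupPST

lemma key_scalar (m : ℕ) (hm2 : 2 ≤ m) (hmo : Odd m) (τ : ℝ) :
    ‖((Complex.exp (-(Complex.I * τ) * (2 * m - 2)) - 1) * ((2 * m : ℂ))⁻¹
      + (Complex.exp (-(Complex.I * τ) * (-2)) - 1)
        * (((2 * m : ℂ))⁻¹ * ((m : ℂ) - 1)))‖ ≠ 1 := by
  intro habs
  set z := Complex.exp (-(Complex.I * τ) * (2 * m - 2)) with hzdef
  set w := Complex.exp (-(Complex.I * τ) * (-2)) with hwdef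
  have hM2 : (2 : ℝ) ≤ (m : ℝ) := by exact_mod_cast hm2
  have hM0 : (0 : ℝ) < (m : ℝ) := by linarith
  have hm0 : (m : ℂ) ≠ 0 := by
    exact_mod_cast Nat.cast_ne_zero.2 (by omega : m ≠ 0)
  have h2m : (2 * m : ℂ) ≠ 0 := mul_ne_zero two_ne_zero hm0
  have hz1 : ‖z‖ = 1 := by
    rw [hzdef, Complex.norm_exp]
    norm_num [Complex.mul_re, Complex.mul_im]
  have hw1 : ‖w‖ = 1 := by
    rw [hwdef, Complex.norm_exp]
    norm_num [Complex.mul_re, Complex.mul_im]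
  have hp : z.re ^ 2 + z.im ^ 2 = 1 := by
    have := Complex.sq_norm z
    rw [hz1] at this
    simpa [Complex.normSq_apply, sq] using this.symm
  have hw2 : w.re ^ 2 + w.im ^ 2 = 1 := by
    have := Complex.sq_norm w
    rw [hw1] at this
    simpa [Complex.normSq_apply, sq] using this.symm
  -- clear denominators
  have hmul : (2 * m : ℂ) * ((z - 1) * ((2 * m : ℂ))⁻¹
      + (w - 1) * (((2 * m : ℂ))⁻¹ * ((m : ℂ) - 1)))
      = z + ((m : ℂ) - 1) * w - (m : ℂ) := by
    field_simp
    ring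
  have habs2 : ‖(z + ((m : ℂ) - 1) * w - (m : ℂ))‖ = 2 * m := by
    rw [← hmul, norm_mul, habs, mul_one]
    rw [show (2 * (m : ℂ)) = (((2 * m : ℕ) : ℂ)) by push_cast; ring, Complex.norm_natCast]
    push_cast
    ring
  have hEq : (z.re + ((m : ℝ) - 1) * w.re - (m : ℝ)) ^ 2
      + (z.im + ((m : ℝ) - 1) * w.im) ^ 2 = (2 * m) ^ 2 := by
    have h := congrArg (fun t : ℝ => t ^ 2) habs2
    rw [Complex.sq_norm, Complex.normSq_apply] at h
    have hre : (z + ((m : ℂ) - 1) * w - (m : ℂ)).re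
        = z.re + ((m : ℝ) - 1) * w.re - (m : ℝ) := by
      simp [Complex.add_re, Complex.sub_re, Complex.mul_re]
    have him : (z + ((m : ℂ) - 1) * w - (m : ℂ)).im
        = z.im + ((m : ℝ) - 1) * w.im := by
      simp [Complex.add_im, Complex.sub_im, Complex.mul_im]
    rw [hre, him] at h
    nlinarith [h]
  set M := (m : ℝ)
  set p := z.re; set q := z.im; set r := w.re; set s := w.im
  have hsum : M * (p + 1) + M * (M - 1) * (r + 1) + (M - 1) * (1 - (p * r + q * s)) = 0 := by
    linear_combination (-(1 : ℝ)/2) * hEq + (1/2) * hp + ((M - 1)^2/2) * hw2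
  have hp' : -1 ≤ p := by nlinarith [sq_nonneg q, sq_nonneg (p + 1)]
  have hr' : -1 ≤ r := by nlinarith [sq_nonneg s, sq_nonneg (r + 1)]
  have hterm1 : 0 ≤ M * (p + 1) := mul_nonneg (by linarith) (by linarith)
  have hterm2 : 0 ≤ M * (M - 1) * (r + 1) :=
    mul_nonneg (mul_nonneg (by linarith) (by linarith)) (by linarith)
  have hterm3 : 0 ≤ (M - 1) * (1 - (p * r + q * s)) := by
    nlinarith [sq_nonneg (p - r), sq_nonneg (q - s)]
  have hMp : M * (p + 1) = 0 := by linarith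
  have hMr : M * (M - 1) * (r + 1) = 0 := by linarith
  have hp1 : p = -1 := by
    rcases mul_eq_zero.mp hMp with h | h
    · linarith
    · linarith
  have hr1 : r = -1 := by
    rcases mul_eq_zero.mp hMr with h | h
    · rcases mul_eq_zero.mp h with h' | h' <;> linarith
    · linarith
  have hq0 : q = 0 := by nlinarith [sq_nonneg q]
  have hs0 : s = 0 := by nlinarith [sq_nonneg s]
  have hz : z = -1 := by
    apply Complex.ext
    · rw [show (-1 : ℂ).re = -1 by simp]; exact hp1
    · rw [show (-1 : ℂ).im = 0 by simp]; exact hq0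
  have hw : w = -1 := by
    apply Complex.ext
    · rw [show (-1 : ℂ).re = -1 by simp]; exact hr1
    · rw [show (-1 : ℂ).im = 0 by simp]; exact hs0
  have hzw : z * w ^ (m - 1) = 1 := by
    rw [hzdef, hwdef, ← Complex.exp_nat_mul, ← Complex.exp_add]
    rw [show ((m - 1 : ℕ) : ℂ) = (m : ℂ) - 1 by
      push_cast [Nat.cast_sub (by omega : 1 ≤ m)]; ring]
    rw [show -(Complex.I * τ) * (2 * m - 2) + ((m : ℂ) - 1) * (-(Complex.I * τ) * (-2)) = 0
      by ring]
    exact Complex.exp_zero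
  rw [hz, hw] at hzw
  have heven : Even (m - 1) := Nat.Odd.sub_odd hmo odd_one
  rw [heven.neg_one_pow] at hzw
  norm_num at hzw

open BlowupPST in
/-- For odd `m ≥ 2`, the blow-up `⊗² K_m` admits no perfect state transfer between `(0,u)`
and `(1,u)`, at any time `τ`. -/
theorem blowup_complete_no_pst (m : ℕ) (hm2 : 2 ≤ m) (hm : Odd m) (u : Fin m) (τ : ℝ) :
    ‖(NormedSpace.exp
        ((-(Complex.I * τ)) •
          ((⊤ : SimpleGraph (Fin m)).blowup 2).adjMatrix ℂ) (0, u) (1, u))‖ ≠ 1 := by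
  have hm0 : (m : ℂ) ≠ 0 := Nat.cast_ne_zero.2 (by omega)
  have h2m : (2 * m : ℂ) ≠ 0 := mul_ne_zero two_ne_zero hm0
  set a : ℂ := -(Complex.I * τ) * (2 * m - 2) with ha
  set b : ℂ := -(Complex.I * τ) * (-2) with hb
  have hsplit : (-(Complex.I * τ)) • ((⊤ : SimpleGraph (Fin m)).blowup 2).adjMatrix ℂ
      = a • E1 m + b • E2 m := by
    rw [adj_eq, decomp hm0, smul_add, smul_smul, smul_smul]
  have hcomm : Commute (a • E1 m) (b • E2 m) := by
    unfold Commute SemiconjBy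
    rw [Matrix.smul_mul, Matrix.mul_smul, hE12, Matrix.smul_mul, Matrix.mul_smul, hE21]
    simp
  have hexp : NormedSpace.exp
      ((-(Complex.I * τ)) • ((⊤ : SimpleGraph (Fin m)).blowup 2).adjMatrix ℂ)
      = 1 + (Complex.exp a - 1) • E1 m + (Complex.exp b - 1) • E2 m := by
    rw [hsplit, Matrix.exp_add_of_commute _ _ hcomm,
      matrix_exp_smul_idem a _ (hE1 h2m), matrix_exp_smul_idem b _ (hE2 h2m)]
    simp only [mul_add, add_mul, one_mul, mul_one, Matrix.mul_smul, Matrix.smul_mul,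
      hE12, smul_zero]
    abel
  rw [hexp]
  have hne : (((0 : ZMod 2), u) : ZMod 2 × Fin m) ≠ ((1 : ZMod 2), u) := by
    simp only [ne_eq, Prod.mk.injEq, not_and]
    intro h
    exact absurd h (by decide)
  have hentry : (1 + (Complex.exp a - 1) • E1 m + (Complex.exp b - 1) • E2 m)
        ((0 : ZMod 2), u) ((1 : ZMod 2), u)
      = (Complex.exp a - 1) * ((2 * m : ℂ))⁻¹
        + (Complex.exp b - 1) * (((2 * m : ℂ))⁻¹ * ((m : ℂ) - 1)) := by
    simp [Matrix.add_apply, Matrix.smul_apply, Matrix.one_apply_ne hne, E1, E2, P2,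
      BlowupPST.J, BlowupPST.B, Matrix.sub_apply, Matrix.of_apply, smul_eq_mul]
  rw [hentry, ha, hb]
  exact key_scalar m hm2 hm τ
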